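/- Let H = p₁² + p₂² + a(x₁²+x₂²) + b(x₁²+x₂²)/(x₁²−x₂²)² + c(x₁²+x₂²)/(x₁²x₂²) on the open set where x₁x₂(x₁²−x₂²) ≠ 0. Then K₂ = (x₁p₂ − x₂p₁)² + 4b x₁²x₂²/(x₁²−x₂²)² + c(x₁⁴+x₂⁴)/(x₁²x₂²) Poisson-commutes with H. -/

import Mathlib

open Finset

/-- Canonical Poisson bracket on phase space ℝ²ⁿ = (Fin n → ℝ) × (Fin n → ℝ). -/
noncomputable def pb {n : ℕ} (f g : (Fin n → ℝ) × (Fin n → ℝ) → ℝ) :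
    (Fin n → ℝ) × (Fin n → ℝ) → ℝ := fun z =>
  ∑ j : Fin n,
    (fderiv ℝ f z ((Pi.single j 1 : Fin n → ℝ), 0) * fderiv ℝ g z (0, (Pi.single j 1 : Fin n → ℝ)) -
     fderiv ℝ f z (0, (Pi.single j 1 : Fin n → ℝ)) * fderiv ℝ g z ((Pi.single j 1 : Fin n → ℝ), 0))

noncomputable abbrev Xc (i : Fin 2) : ((Fin 2 → ℝ) × (Fin 2 → ℝ)) →L[ℝ] ℝ :=
  (ContinuousLinearMap.proj i).comp (ContinuousLinearMap.fst ℝ (Fin 2 → ℝ) (Fin 2 → ℝ))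

noncomputable abbrev Pc (i : Fin 2) : ((Fin 2 → ℝ) × (Fin 2 → ℝ)) →L[ℝ] ℝ :=
  (ContinuousLinearMap.proj i).comp (ContinuousLinearMap.snd ℝ (Fin 2 → ℝ) (Fin 2 → ℝ))


theorem HasFDerivAt.myPow {E : Type*} [NormedAddCommGroup E] [NormedSpace ℝ E] {f : E → ℝ}
    {f' : E →L[ℝ] ℝ} {x : E} (hf : HasFDerivAt f f' x) (n : ℕ) :
    HasFDerivAt (fun y => f y ^ n) (((n : ℝ) * f x ^ (n - 1)) • f') x :=
  (hasDerivAt_pow n (f x)).comp_hasFDerivAt x hf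

theorem HasFDerivAt.myDiv {E : Type*} [NormedAddCommGroup E] [NormedSpace ℝ E] {f g : E → ℝ}
    {f' g' : E →L[ℝ] ℝ} {x : E} (hf : HasFDerivAt f f' x) (hg : HasFDerivAt g g' x)
    (hx : g x ≠ 0) :
    HasFDerivAt (fun y => f y / g y) (f x • ((-(g x ^ 2)⁻¹) • g') + (g x)⁻¹ • f') x := by
  simp only [div_eq_mul_inv]
  exact hf.mul ((hasDerivAt_inv hx).comp_hasFDerivAt x hg)

/-- For H = p₁² + p₂² + a(x₁²+x₂²) + b(x₁²+x₂²)/(x₁²−x₂²)² + c(x₁²+x₂²)/(x₁²x₂²), the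
quantity K₂ = (x₁p₂ − x₂p₁)² + 4b x₁²x₂²/(x₁²−x₂²)² + c(x₁⁴+x₂⁴)/(x₁²x₂²) Poisson-commutes
with H on the open set where x₁x₂(x₁²−x₂²) ≠ 0. -/
theorem stmt18 (a b c : ℝ) :
    ∀ z : (Fin 2 → ℝ) × (Fin 2 → ℝ),
      z.1 0 ≠ 0 → z.1 1 ≠ 0 → (z.1 0) ^ 2 ≠ (z.1 1) ^ 2 →
      pb
        (fun z => (z.1 0 * z.2 1 - z.1 1 * z.2 0) ^ 2
          + 4 * b * ((z.1 0) ^ 2 * (z.1 1) ^ 2) / ((z.1 0) ^ 2 - (z.1 1) ^ 2) ^ 2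
          + c * ((z.1 0) ^ 4 + (z.1 1) ^ 4) / ((z.1 0) ^ 2 * (z.1 1) ^ 2))
        (fun z => (z.2 0) ^ 2 + (z.2 1) ^ 2 + a * ((z.1 0) ^ 2 + (z.1 1) ^ 2)
          + b * ((z.1 0) ^ 2 + (z.1 1) ^ 2) / ((z.1 0) ^ 2 - (z.1 1) ^ 2) ^ 2
          + c * ((z.1 0) ^ 2 + (z.1 1) ^ 2) / ((z.1 0) ^ 2 * (z.1 1) ^ 2)) z = 0 := by
  intro z hx1 hx2 hx12
  have hden1 : ((z.1 0) ^ 2 - (z.1 1) ^ 2) ^ 2 ≠ 0 := pow_ne_zero _ (sub_ne_zero.mpr hx12)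
  have hden2 : (z.1 0) ^ 2 * (z.1 1) ^ 2 ≠ 0 :=
    mul_ne_zero (pow_ne_zero _ hx1) (pow_ne_zero _ hx2)
  have h1 : HasFDerivAt (fun z : (Fin 2 → ℝ) × (Fin 2 → ℝ) => z.1 0) (Xc 0) z :=
    (Xc 0).hasFDerivAt
  have h2 : HasFDerivAt (fun z : (Fin 2 → ℝ) × (Fin 2 → ℝ) => z.1 1) (Xc 1) z :=
    (Xc 1).hasFDerivAt
  have h3 : HasFDerivAt (fun z : (Fin 2 → ℝ) × (Fin 2 → ℝ) => z.2 0) (Pc 0) z :=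
    (Pc 0).hasFDerivAt
  have h4 : HasFDerivAt (fun z : (Fin 2 → ℝ) × (Fin 2 → ℝ) => z.2 1) (Pc 1) z :=
    (Pc 1).hasFDerivAt
  have hK := ((((h1.mul h4).sub (h2.mul h3)).myPow 2).add
      ((((h1.myPow 2).mul (h2.myPow 2)).const_mul (4 * b)).myDiv
        (((h1.myPow 2).sub (h2.myPow 2)).myPow 2) hden1)).add
      ((((h1.myPow 4).add (h2.myPow 4)).const_mul c).myDiv ((h1.myPow 2).mul (h2.myPow 2)) hden2)
  have hH := ((((h3.myPow 2).add (h4.myPow 2)).add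
      (((h1.myPow 2).add (h2.myPow 2)).const_mul a)).add
      ((((h1.myPow 2).add (h2.myPow 2)).const_mul b).myDiv
        (((h1.myPow 2).sub (h2.myPow 2)).myPow 2) hden1)).add
      ((((h1.myPow 2).add (h2.myPow 2)).const_mul c).myDiv ((h1.myPow 2).mul (h2.myPow 2)) hden2)
  rw [pb, Fin.sum_univ_two, show fderiv ℝ (fun z : (Fin 2 → ℝ) × (Fin 2 → ℝ) => (z.1 0 * z.2 1 - z.1 1 * z.2 0) ^ 2
          + 4 * b * ((z.1 0) ^ 2 * (z.1 1) ^ 2) / ((z.1 0) ^ 2 - (z.1 1) ^ 2) ^ 2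
          + c * ((z.1 0) ^ 4 + (z.1 1) ^ 4) / ((z.1 0) ^ 2 * (z.1 1) ^ 2)) z = _ from hK.fderiv,
    show fderiv ℝ (fun z : (Fin 2 → ℝ) × (Fin 2 → ℝ) => (z.2 0) ^ 2 + (z.2 1) ^ 2 + a * ((z.1 0) ^ 2 + (z.1 1) ^ 2)
          + b * ((z.1 0) ^ 2 + (z.1 1) ^ 2) / ((z.1 0) ^ 2 - (z.1 1) ^ 2) ^ 2
          + c * ((z.1 0) ^ 2 + (z.1 1) ^ 2) / ((z.1 0) ^ 2 * (z.1 1) ^ 2)) z = _ from hH.fderiv]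
  simp only [ContinuousLinearMap.add_apply, ContinuousLinearMap.sub_apply,
    ContinuousLinearMap.smul_apply, ContinuousLinearMap.coe_comp', Function.comp_apply,
    ContinuousLinearMap.coe_fst', ContinuousLinearMap.coe_snd',
    ContinuousLinearMap.proj_apply, Pi.single_eq_same, smul_eq_mul,
    ne_eq, one_ne_zero, not_false_eq_true, Pi.single_eq_of_ne, Pi.zero_apply,
    Fin.isValue, zero_ne_one, Pi.mul_apply, Pi.sub_apply, Pi.add_apply]
  field_simp
  ring
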